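/- arXiv:1211.6483 — 3 statements merged into one kernel-verified Lean document; each statement's English description precedes it below -/
import Mathlib

section
/- Let a₀, b₀, a₁ be a V-path in which a₀ = S is a face sequence of type 7, and write a₁ = S′. Then exactly one of the following holds: (i) S′ is of type 1, 2 or 8 and S′ has a 0 at the position of the rightmost ∗ of S; (ii) S′ is of type 2, 3, 4, 8 or 10 and the rightmost ∗ of S′ occupies the same position as the rightmost ∗ of S; or (iii) S′ is of type 6 and S′ has a 1 at the position of the rightmost ∗ of S. -/
set_option linter.unusedVariables false

/-- The alphabet `{0, 1, ∗}` for face sequences. -/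
inductive Letter : Type
  | zero
  | one
  | star
  deriving DecidableEq

/-- A sequence of length `n` over the alphabet `{0, 1, ∗}`. -/
abbrev FSeq (n : ℕ) := Fin n → Letter

/-- `S(1)`, the number of `1`'s in `S`. -/
def count1 {n : ℕ} (S : FSeq n) : ℕ := (Finset.univ.filter fun i => S i = Letter.one).card

/-- `S(0)`, the number of `0`'s in `S`. -/
def count0 {n : ℕ} (S : FSeq n) : ℕ := (Finset.univ.filter fun i => S i = Letter.zero).card

/-- The number of `∗`'s in `S`. -/
def countStar {n : ℕ} (S : FSeq n) : ℕ := (Finset.univ.filter fun i => S i = Letter.star).card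

/-- A face sequence: either no `∗` and exactly `k` ones, or at most `k-1` ones and
(#ones) + (#stars) ≥ `k+1`. -/
def FaceSeq {n : ℕ} (k : ℕ) (S : FSeq n) : Prop :=
  (countStar S = 0 ∧ count1 S = k) ∨ (count1 S + 1 ≤ k ∧ k + 1 ≤ count1 S + countStar S)

/-- `v₀`, the sequence of `k` ones followed by `n - k` zeros. -/
def v0seq (n k : ℕ) : FSeq n := fun i => if (i : ℕ) < k then Letter.one else Letter.zero

/-- `S` contains at least one `∗`. -/
def hasStar {n : ℕ} (S : FSeq n) : Prop := ∃ i, S i = Letter.star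

/-- There is a `1` to the right of the rightmost `∗` (in particular `S` contains a `∗`). -/
def OneRight {n : ℕ} (S : FSeq n) : Prop :=
  hasStar S ∧ ∃ i, S i = Letter.one ∧ ∀ j, i < j → S j ≠ Letter.star

/-- There is no `1` to the right of the rightmost `∗` (and `S` contains a `∗`). -/
def NoOneRight {n : ℕ} (S : FSeq n) : Prop :=
  hasStar S ∧ ∀ i, S i = Letter.one → ∃ j, i < j ∧ S j = Letter.star

/-- There is a `0` to the left of the leftmost `∗` (in particular `S` contains a `∗`). -/
def ZeroLeft {n : ℕ} (S : FSeq n) : Prop :=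
  hasStar S ∧ ∃ i, S i = Letter.zero ∧ ∀ j, j < i → S j ≠ Letter.star

/-- There is no `0` to the left of the leftmost `∗` (and `S` contains a `∗`). -/
def NoZeroLeft {n : ℕ} (S : FSeq n) : Prop :=
  hasStar S ∧ ∀ i, S i = Letter.zero → ∃ j, j < i ∧ S j = Letter.star

/-- `i` is the position of the rightmost `1` of `S`. -/
def IsRightmostOne {n : ℕ} (S : FSeq n) (i : Fin n) : Prop :=
  S i = Letter.one ∧ ∀ j, i < j → S j ≠ Letter.one

/-- `i` is the position of the rightmost `∗` of `S`. -/
def IsRightmostStar {n : ℕ} (S : FSeq n) (i : Fin n) : Prop :=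
  S i = Letter.star ∧ ∀ j, i < j → S j ≠ Letter.star

/-- `i` is the position of the leftmost `0` of `S`. -/
def IsLeftmostZero {n : ℕ} (S : FSeq n) (i : Fin n) : Prop :=
  S i = Letter.zero ∧ ∀ j, j < i → S j ≠ Letter.zero

/-- `i` is the position of the leftmost `∗` of `S`. -/
def IsLeftmostStar {n : ℕ} (S : FSeq n) (i : Fin n) : Prop :=
  S i = Letter.star ∧ ∀ j, j < i → S j ≠ Letter.star

/-- Condition of rule (1), subcondition (a). -/
def Cond1a {n : ℕ} (k m0 m1 : ℕ) (S : FSeq n) : Prop :=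
  count1 S + 1 ≤ k ∧ OneRight S ∧ count1 S ≠ m1

/-- Condition of rule (1), subcondition (b). -/
def Cond1b {n : ℕ} (k m0 m1 : ℕ) (S : FSeq n) : Prop :=
  count1 S + 1 ≤ k ∧ OneRight S ∧ count1 S = m1 ∧ m0 < count0 S

/-- Condition of rule (1), subcondition (c): no `0` to the left of the leftmost `∗`. -/
def Cond1c {n : ℕ} (k m0 m1 : ℕ) (S : FSeq n) : Prop :=
  count1 S + 1 ≤ k ∧ OneRight S ∧ count1 S = m1 ∧ count0 S = m0 ∧ NoZeroLeft S

/-- Condition of rule (2), subcondition (a): here `count1 S + 1 ≠ m1` encodes `S(1) ≠ m₁ - 1`. -/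
def Cond2a {n : ℕ} (k m0 m1 : ℕ) (S : FSeq n) : Prop :=
  count1 S + 2 ≤ k ∧ NoOneRight S ∧ count1 S + 1 ≠ m1

/-- Condition of rule (2), subcondition (b). -/
def Cond2b {n : ℕ} (k m0 m1 : ℕ) (S : FSeq n) : Prop :=
  count1 S + 2 ≤ k ∧ NoOneRight S ∧ count1 S + 1 = m1 ∧ m0 < count0 S

/-- Condition of rule (2), subcondition (c). -/
def Cond2c {n : ℕ} (k m0 m1 : ℕ) (S : FSeq n) : Prop :=
  count1 S + 2 ≤ k ∧ NoOneRight S ∧ count1 S + 1 = m1 ∧ count0 S = m0 ∧ NoZeroLeft S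

/-- `S` is of type 1 (satisfies the condition of rule (1)). -/
def Type1 {n : ℕ} (k m0 m1 : ℕ) (S : FSeq n) : Prop :=
  Cond1a k m0 m1 S ∨ Cond1b k m0 m1 S ∨ Cond1c k m0 m1 S

/-- `S` is of type 2 (satisfies the condition of rule (2)). -/
def Type2 {n : ℕ} (k m0 m1 : ℕ) (S : FSeq n) : Prop :=
  Cond2a k m0 m1 S ∨ Cond2b k m0 m1 S ∨ Cond2c k m0 m1 S

/-- `S` is of type 3: `S(1) = k-1`, `S(0) ≤ n-k-1`, no `1` right of the rightmost `∗`,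
a `0` left of the leftmost `∗`. -/
def Type3 {n : ℕ} (k : ℕ) (S : FSeq n) : Prop :=
  count1 S + 1 = k ∧ count0 S + k + 1 ≤ n ∧ NoOneRight S ∧ ZeroLeft S

/-- `S` is of type 4: `S(1) = k-1`, `S(0) ≤ n-k-2`, no `1` right of the rightmost `∗`,
no `0` left of the leftmost `∗`. -/
def Type4 {n : ℕ} (k : ℕ) (S : FSeq n) : Prop :=
  count1 S + 1 = k ∧ count0 S + k + 2 ≤ n ∧ NoOneRight S ∧ NoZeroLeft S

/-- `S` is of type 5: `S(1) = m₁`, `S(0) ≤ m₀`, a `1` right of the rightmost `∗`,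
a `0` left of the leftmost `∗`. -/
def Type5 {n : ℕ} (m0 m1 : ℕ) (S : FSeq n) : Prop :=
  count1 S = m1 ∧ count0 S ≤ m0 ∧ OneRight S ∧ ZeroLeft S

/-- `S` is of type 6: `S(1) = m₁`, `S(0) < m₀`, a `1` right of the rightmost `∗`,
no `0` left of the leftmost `∗`. -/
def Type6 {n : ℕ} (m0 m1 : ℕ) (S : FSeq n) : Prop :=
  count1 S = m1 ∧ count0 S < m0 ∧ OneRight S ∧ NoZeroLeft S

/-- `S` is of type 7: `S(1) = m₁-1`, `S(0) ≤ m₀`, no `1` right of the rightmost `∗`,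
a `0` left of the leftmost `∗`. -/
def Type7 {n : ℕ} (m0 m1 : ℕ) (S : FSeq n) : Prop :=
  count1 S + 1 = m1 ∧ count0 S ≤ m0 ∧ NoOneRight S ∧ ZeroLeft S

/-- `S` is of type 8: `S(1) = m₁-1`, `S(0) < m₀`, no `1` right of the rightmost `∗`,
no `0` left of the leftmost `∗`. -/
def Type8 {n : ℕ} (m0 m1 : ℕ) (S : FSeq n) : Prop :=
  count1 S + 1 = m1 ∧ count0 S < m0 ∧ NoOneRight S ∧ NoZeroLeft S

/-- `S` is of type 9: `S(1) = k`, `S(0) = n-k`, and `S ≠ v₀`. -/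
def Type9 {n : ℕ} (k : ℕ) (S : FSeq n) : Prop :=
  count1 S = k ∧ count0 S + k = n ∧ S ≠ v0seq n k

/-- `S` is of type 10: `S(1) = k-1`, `S(0) = n-k-1`, no `1` right of the rightmost `∗`,
no `0` left of the leftmost `∗`. -/
def Type10 {n : ℕ} (k : ℕ) (S : FSeq n) : Prop :=
  count1 S + 1 = k ∧ count0 S + k + 1 = n ∧ NoOneRight S ∧ NoZeroLeft S

/-- `S` is of type `i` for `1 ≤ i ≤ 10` (and of no type otherwise). -/
def OfType {n : ℕ} (k m0 m1 : ℕ) (i : ℕ) (S : FSeq n) : Prop :=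
  match i with
  | 1 => Type1 k m0 m1 S
  | 2 => Type2 k m0 m1 S
  | 3 => Type3 k S
  | 4 => Type4 k S
  | 5 => Type5 m0 m1 S
  | 6 => Type6 m0 m1 S
  | 7 => Type7 m0 m1 S
  | 8 => Type8 m0 m1 S
  | 9 => Type9 k S
  | 10 => Type10 k S
  | _ => False

/-- The replacement of rule (1): replace the rightmost `1` with `∗`. -/
def Apply1 {n : ℕ} (S S' : FSeq n) : Prop :=
  ∃ i, IsRightmostOne S i ∧ S' = Function.update S i Letter.star

/-- The replacement of rule (2): replace the rightmost `∗` with `1`. -/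
def Apply2 {n : ℕ} (S S' : FSeq n) : Prop :=
  ∃ i, IsRightmostStar S i ∧ S' = Function.update S i Letter.one

/-- The replacement of rules (3), (5) and (7): replace the leftmost `0` with `∗`. -/
def Apply3 {n : ℕ} (S S' : FSeq n) : Prop :=
  ∃ i, IsLeftmostZero S i ∧ S' = Function.update S i Letter.star

/-- The replacement of rules (4), (6) and (8): replace the leftmost `∗` with `0`. -/
def Apply4 {n : ℕ} (S S' : FSeq n) : Prop :=
  ∃ i, IsLeftmostStar S i ∧ S' = Function.update S i Letter.zero

/-- The replacement of rule (9): replace the leftmost `0` and the rightmost `1` each with `∗`. -/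
def Apply9 {n : ℕ} (S S' : FSeq n) : Prop :=
  ∃ i j, IsLeftmostZero S i ∧ IsRightmostOne S j ∧
    S' = Function.update (Function.update S i Letter.star) j Letter.star

/-- The replacement of rule (10): replace the leftmost `∗` with `0` and the other `∗` with `1`. -/
def Apply10 {n : ℕ} (S S' : FSeq n) : Prop :=
  ∃ i j, IsLeftmostStar S i ∧ IsRightmostStar S j ∧ i ≠ j ∧
    S' = Function.update (Function.update S i Letter.zero) j Letter.one

/-- The matching `V` on face sequences: a face sequence `S` of type 1, 3, 5, 7 or 9 is
matched with the result `S'` of applying the corresponding rule to it. -/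
def Vmatch {n : ℕ} (k m0 m1 : ℕ) (S S' : FSeq n) : Prop :=
  FaceSeq k S ∧
    ((Type1 k m0 m1 S ∧ Apply1 S S') ∨
     (Type3 k S ∧ Apply3 S S') ∨
     (Type5 m0 m1 S ∧ Apply3 S S') ∨
     (Type7 m0 m1 S ∧ Apply3 S S') ∨
     (Type9 k S ∧ Apply9 S S'))

/-- The vertex set of a face sequence `S`: the vertex sequences (0/1-sequences with
exactly `k` ones) agreeing with `S` wherever `S` is not `∗`. -/
def VertexSet {n : ℕ} (k : ℕ) (S : FSeq n) : Set (FSeq n) :=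
  {v | (∀ i, v i ≠ Letter.star) ∧ count1 v = k ∧ ∀ i, S i ≠ Letter.star → v i = S i}

/-- The dimension of the face `F(S)`. -/
def fdim {n : ℕ} (S : FSeq n) : ℕ :=
  if countStar S = 0 then 0 else countStar S - 1

/-- `T` is a codimension-1 face of `S`. -/
def Codim1 {n : ℕ} (k : ℕ) (T S : FSeq n) : Prop :=
  VertexSet k T ⊂ VertexSet k S ∧ fdim T + 1 = fdim S

/-- A (nontrivial) `V`-path `a₀, b₀, a₁, b₁, …, b_r, a_{r+1}` of face sequences. -/
structure VPath (n k m0 m1 r : ℕ) where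
  a : Fin (r + 2) → FSeq n
  b : Fin (r + 1) → FSeq n
  face_a : ∀ i, FaceSeq k (a i)
  face_b : ∀ i, FaceSeq k (b i)
  mem : ∀ i : Fin (r + 1), Vmatch k m0 m1 (a i.castSucc) (b i)
  codim_left : ∀ i : Fin (r + 1), Codim1 k (a i.castSucc) (b i)
  codim_right : ∀ i : Fin (r + 1), Codim1 k (a i.succ) (b i)
  step_ne : ∀ i : Fin (r + 1), a i.castSucc ≠ a i.succ

/-- Alternative (i) in Statement 14: `S'` is of type 1, 2 or 8 and has a `0` at the
position of the rightmost `∗` of `S`. -/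
def Out14i {n : ℕ} (k m0 m1 : ℕ) (S S' : FSeq n) : Prop :=
  (Type1 k m0 m1 S' ∨ Type2 k m0 m1 S' ∨ Type8 m0 m1 S') ∧
    ∃ i, IsRightmostStar S i ∧ S' i = Letter.zero

/-- Alternative (ii) in Statement 14: `S'` is of type 2, 3, 4, 8 or 10 and the rightmost
`∗` of `S'` is at the same position as the rightmost `∗` of `S`. -/
def Out14ii {n : ℕ} (k m0 m1 : ℕ) (S S' : FSeq n) : Prop :=
  (Type2 k m0 m1 S' ∨ Type3 k S' ∨ Type4 k S' ∨ Type8 m0 m1 S' ∨ Type10 k S') ∧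
    ∃ i, IsRightmostStar S i ∧ IsRightmostStar S' i

/-- Alternative (iii) in Statement 14: `S'` is of type 6 and has a `1` at the position of
the rightmost `∗` of `S`. -/
def Out14iii {n : ℕ} (k m0 m1 : ℕ) (S S' : FSeq n) : Prop :=
  Type6 m0 m1 S' ∧ ∃ i, IsRightmostStar S i ∧ S' i = Letter.one


section Helpers

open Finset

variable {n : ℕ}

lemma letter_cases (l : Letter) : l = Letter.zero ∨ l = Letter.one ∨ l = Letter.star := by
  cases l <;> simp

lemma card_filter_update (S : FSeq n) (i : Fin n) (v c : Letter) :
    (Finset.univ.filter fun j => Function.update S i v j = c).card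
      + (if S i = c then 1 else 0)
      = (Finset.univ.filter fun j => S j = c).card + (if v = c then 1 else 0) := by
  classical
  rw [Finset.card_filter, Finset.card_filter,
      ← Finset.add_sum_erase _ _ (Finset.mem_univ i),
      ← Finset.add_sum_erase _ _ (Finset.mem_univ i)]
  simp only [Function.update_self]
  have h : ∀ j ∈ Finset.univ.erase i,
      (if Function.update S i v j = c then (1:ℕ) else 0) = (if S j = c then 1 else 0) := by
    intro j hj
    rw [Function.update_of_ne (Finset.ne_of_mem_erase hj)]
  rw [Finset.sum_congr rfl h]
  omega

lemma count1_update (S : FSeq n) (i : Fin n) (v : Letter) :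
    count1 (Function.update S i v) + (if S i = Letter.one then 1 else 0)
      = count1 S + (if v = Letter.one then 1 else 0) :=
  card_filter_update S i v Letter.one

lemma count0_update (S : FSeq n) (i : Fin n) (v : Letter) :
    count0 (Function.update S i v) + (if S i = Letter.zero then 1 else 0)
      = count0 S + (if v = Letter.zero then 1 else 0) :=
  card_filter_update S i v Letter.zero

lemma countStar_update (S : FSeq n) (i : Fin n) (v : Letter) :
    countStar (Function.update S i v) + (if S i = Letter.star then 1 else 0)
      = countStar S + (if v = Letter.star then 1 else 0) :=
  card_filter_update S i v Letter.star

lemma countStar_pos (S : FSeq n) (i : Fin n) (hi : S i = Letter.star) :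
    1 ≤ countStar S := by
  apply Finset.card_pos.mpr
  exact ⟨i, by simp [hi]⟩

lemma count0_pos (S : FSeq n) (i : Fin n) (hi : S i = Letter.zero) :
    1 ≤ count0 S := by
  apply Finset.card_pos.mpr
  exact ⟨i, by simp [hi]⟩

lemma not_oneRight_noOneRight (S : FSeq n) (h1 : OneRight S) (h2 : NoOneRight S) : False := by
  obtain ⟨_, i, hi, hr⟩ := h1
  obtain ⟨j, hij, hj⟩ := h2.2 i hi
  exact hr j hij hj

lemma oneRight_dichotomy (S : FSeq n) (h : hasStar S) : OneRight S ∨ NoOneRight S := by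
  by_cases hn : ∀ i, S i = Letter.one → ∃ j, i < j ∧ S j = Letter.star
  · exact Or.inr ⟨h, hn⟩
  · push_neg at hn
    obtain ⟨i, hi, hr⟩ := hn
    exact Or.inl ⟨h, i, hi, fun j hj hs => (hr j hj) hs⟩

lemma zeroLeft_dichotomy (S : FSeq n) (h : hasStar S) : ZeroLeft S ∨ NoZeroLeft S := by
  by_cases hn : ∀ i, S i = Letter.zero → ∃ j, j < i ∧ S j = Letter.star
  · exact Or.inr ⟨h, hn⟩
  · push_neg at hn
    obtain ⟨i, hi, hr⟩ := hn
    exact Or.inl ⟨h, i, hi, fun j hj hs => (hr j hj) hs⟩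

lemma exists_rightmostStar (S : FSeq n) (h : hasStar S) : ∃ i, IsRightmostStar S i := by
  classical
  obtain ⟨i0, hi0⟩ := h
  have hne : (Finset.univ.filter fun i => S i = Letter.star).Nonempty := ⟨i0, by simp [hi0]⟩
  refine ⟨Finset.max' _ hne, ?_, ?_⟩
  · have := Finset.max'_mem _ hne
    simpa using this
  · intro j hj hsj
    have hjm : j ∈ Finset.univ.filter fun i => S i = Letter.star := by simp [hsj]
    exact absurd (Finset.le_max' _ j hjm) (not_le.mpr hj)

lemma rightmostStar_unique {S : FSeq n} {i j : Fin n}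
    (hi : IsRightmostStar S i) (hj : IsRightmostStar S j) : i = j := by
  rcases lt_trichotomy i j with h | h | h
  · exact absurd hj.1 (hi.2 j h)
  · exact h
  · exact absurd hi.1 (hj.2 i h)

end Helpers


section Shape

open Finset

variable {n k : ℕ}

lemma vertex_of_ones (T : FSeq n) (A : Finset (Fin n))
    (hA : ∀ i ∈ A, T i = Letter.star) (hcard : count1 T + A.card = k) :
    (fun j => if T j = Letter.star then (if j ∈ A then Letter.one else Letter.zero) else T j)
      ∈ VertexSet k T := by
  classical
  set w : FSeq n :=
    fun j => if T j = Letter.star then (if j ∈ A then Letter.one else Letter.zero) else T j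
    with hw
  refine ⟨?_, ?_, ?_⟩
  · intro i hi
    by_cases h : T i = Letter.star
    · by_cases h2 : i ∈ A <;> simp [hw, h, h2] at hi
    · simp [hw, h] at hi
  · have hset : (Finset.univ.filter fun j => w j = Letter.one)
        = (Finset.univ.filter fun j => T j = Letter.one) ∪ A := by
      ext j
      simp only [Finset.mem_filter, Finset.mem_univ, true_and, Finset.mem_union]
      by_cases h : T j = Letter.star
      · by_cases h2 : j ∈ A <;> simp [hw, h, h2]
      · have h2 : j ∉ A := fun hm => h (hA j hm)
        simp [hw, h, h2]
    have hdisj : Disjoint (Finset.univ.filter fun j => T j = Letter.one) A := by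
      rw [Finset.disjoint_left]
      intro j hj hjA
      have h1 : T j = Letter.one := by simpa using hj
      have h2 := hA j hjA
      rw [h1] at h2
      exact absurd h2 (by simp)
    show (Finset.univ.filter fun j => w j = Letter.one).card = k
    rw [hset, Finset.card_union_of_disjoint hdisj]
    exact hcard
  · intro i hi
    simp [hw, hi]

lemma exists_vertex_val (T : FSeq n) (h1 : count1 T + 1 ≤ k)
    (h2 : k + 1 ≤ count1 T + countStar T) (i : Fin n) (hi : T i = Letter.star)
    (c : Letter) (hc : c = Letter.zero ∨ c = Letter.one) :
    ∃ w ∈ VertexSet k T, w i = c := by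
  classical
  set St := Finset.univ.filter fun j => T j = Letter.star with hSt
  have hStcard : St.card = countStar T := rfl
  have hiSt : i ∈ St := by simp [hSt, hi]
  have herase : (St.erase i).card = countStar T - 1 := by
    rw [Finset.card_erase_of_mem hiSt, hStcard]
  rcases hc with hc | hc
  · -- zero: choose A of size k - count1 T inside St.erase i
    obtain ⟨A, hAsub, hAcard⟩ := Finset.exists_subset_card_eq (s := St.erase i) (n := k - count1 T)
      (by omega)
    have hAst : ∀ j ∈ A, T j = Letter.star := by
      intro j hj
      have := hAsub hj
      simp [hSt] at this
      exact this.2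
    have hmem := vertex_of_ones (k := k) T A hAst (by omega)
    refine ⟨_, hmem, ?_⟩
    have hiA : i ∉ A := fun h => (Finset.notMem_erase i St) (hAsub h)
    simp [hi, hiA, hc]
  · -- one: choose A' of size k - count1 T - 1, add i
    obtain ⟨A', hAsub, hAcard⟩ := Finset.exists_subset_card_eq (s := St.erase i) (n := k - count1 T - 1)
      (by omega)
    have hiA' : i ∉ A' := fun h => (Finset.notMem_erase i St) (hAsub h)
    have hAst : ∀ j ∈ insert i A', T j = Letter.star := by
      intro j hj
      rcases Finset.mem_insert.mp hj with h | h
      · rw [h]; exact hi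
      · have := hAsub h
        simp [hSt] at this
        exact this.2
    have hcard : count1 T + (insert i A').card = k := by
      rw [Finset.card_insert_of_notMem hiA']
      omega
    have hmem := vertex_of_ones (k := k) T (insert i A') hAst hcard
    refine ⟨_, hmem, ?_⟩
    simp [hi, hc]

lemma codim1_shape (b T : FSeq n) (hTf : FaceSeq k T)
    (hsub : VertexSet k T ⊆ VertexSet k b)
    (hdim : fdim T + 1 = fdim b) (hb4 : 4 ≤ countStar b) :
    ∃ p, b p = Letter.star ∧
      (T = Function.update b p Letter.zero ∨ T = Function.update b p Letter.one) := by
  classical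
  have hfb : fdim b = countStar b - 1 := by
    unfold fdim
    rw [if_neg (by omega)]
  have hT0 : countStar T ≠ 0 := by
    intro h
    unfold fdim at hdim
    rw [if_pos h, if_neg (show ¬ countStar b = 0 by omega)] at hdim
    omega
  have hfT : fdim T = countStar T - 1 := by
    unfold fdim
    rw [if_neg hT0]
  have hTcount : countStar T + 1 = countStar b := by
    rw [hfT, hfb] at hdim
    omega
  have hT2 : count1 T + 1 ≤ k ∧ k + 1 ≤ count1 T + countStar T := by
    rcases hTf with h | h
    · exact absurd h.1 hT0
    · exact h
  -- stars of T are stars of b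
  have hstar_sub : ∀ i, T i = Letter.star → b i = Letter.star := by
    intro i hi
    by_contra hbi
    obtain ⟨w0, hw0, hw0i⟩ := exists_vertex_val T hT2.1 hT2.2 i hi Letter.zero (Or.inl rfl)
    obtain ⟨w1, hw1, hw1i⟩ := exists_vertex_val T hT2.1 hT2.2 i hi Letter.one (Or.inr rfl)
    have h0 : w0 i = b i := (hsub hw0).2.2 i hbi
    have h1 : w1 i = b i := (hsub hw1).2.2 i hbi
    rw [hw0i] at h0; rw [hw1i] at h1
    rw [← h0] at h1
    exact absurd h1 (by simp)
  have hagree : ∀ i, T i ≠ Letter.star → b i ≠ Letter.star → T i = b i := by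
    intro i hTi hbi
    have hstar : ∃ j, T j = Letter.star := by
      have h1 : 1 ≤ countStar T := by omega
      obtain ⟨j, hj⟩ := Finset.card_pos.mp h1
      simp at hj
      exact ⟨j, hj⟩
    obtain ⟨j, hj⟩ := hstar
    obtain ⟨w, hw, _⟩ := exists_vertex_val T hT2.1 hT2.2 j hj Letter.zero (Or.inl rfl)
    have h1 : w i = T i := hw.2.2 i hTi
    have h2 : w i = b i := (hsub hw).2.2 i hbi
    rw [← h1, h2]
  -- the finset argument
  set StT := Finset.univ.filter fun i => T i = Letter.star with hStT
  set Stb := Finset.univ.filter fun i => b i = Letter.star with hStb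
  have hss : StT ⊆ Stb := by
    intro i hi
    simp [hStT] at hi
    simp [hStb, hstar_sub i hi]
  have hcards : StT.card = countStar T := rfl
  have hcardb : Stb.card = countStar b := rfl
  have hone : (Stb \ StT).card = 1 := by
    rw [Finset.card_sdiff_of_subset hss, hcards, hcardb]
    omega
  obtain ⟨p, hp⟩ := Finset.card_eq_one.mp hone
  have hpmem : p ∈ Stb \ StT := hp ▸ Finset.mem_singleton_self p
  have hpb : b p = Letter.star := by
    have := (Finset.mem_sdiff.mp hpmem).1
    simpa [hStb] using this
  have hpT : T p ≠ Letter.star := by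
    have := (Finset.mem_sdiff.mp hpmem).2
    simpa [hStT] using this
  have hTe : T = Function.update b p (T p) := by
    funext j
    by_cases hj : j = p
    · subst hj; simp
    · rw [Function.update_of_ne hj]
      by_cases hbj : b j = Letter.star
      · have hjb : j ∈ Stb := by simp [hStb, hbj]
        have hjnd : j ∉ Stb \ StT := by
          rw [hp]; simp [hj]
        have hjT : j ∈ StT := by
          by_contra h
          exact hjnd (Finset.mem_sdiff.mpr ⟨hjb, h⟩)
        have : T j = Letter.star := by simpa [hStT] using hjT
        rw [this, hbj]
      · exact hagree j (fun h => hbj (hstar_sub j h)) hbj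
  refine ⟨p, hpb, ?_⟩
  rcases letter_cases (T p) with h | h | h
  · left; rw [hTe, h]
  · right; rw [hTe, h]
  · exact absurd h hpT

end Shape


section Classify

open Finset

variable {n : ℕ}

lemma classify_m1 {k m0 m1 : ℕ} (T : FSeq n) (hm1u : m1 + 1 ≤ k) (hm0 : m0 + k + 1 ≤ n)
    (hc1 : count1 T = m1) (hc0 : count0 T < m0) (hnor : NoOneRight T) (hst : hasStar T) :
    Type2 k m0 m1 T ∨ Type3 k T ∨ Type4 k T := by
  by_cases hk : m1 + 2 ≤ k
  · exact Or.inl (Or.inl ⟨by omega, hnor, by omega⟩)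
  · rcases zeroLeft_dichotomy T hst with hzl | hnzl
    · exact Or.inr (Or.inl ⟨by omega, by omega, hnor, hzl⟩)
    · exact Or.inr (Or.inr ⟨by omega, by omega, hnor, hnzl⟩)

lemma classify_m1m1 {k m0 m1 : ℕ} (T : FSeq n) (hm1u : m1 + 1 ≤ k)
    (hc1 : count1 T + 1 = m1) (hc0 : count0 T ≤ m0) (hnor : NoOneRight T)
    (hnzl : NoZeroLeft T) :
    Type2 k m0 m1 T ∨ Type8 m0 m1 T := by
  rcases lt_or_eq_of_le hc0 with h | h
  · exact Or.inr ⟨hc1, h, hnor, hnzl⟩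
  · exact Or.inl (Or.inr (Or.inr ⟨by omega, hnor, hc1, h, hnzl⟩))

end Classify

/-- In a `V`-path `a₀, b₀, a₁` with `a₀` of type 7, exactly one of the
alternatives (i), (ii), (iii) holds for `S = a₀` and `S' = a₁`. -/
theorem vpath_from_type7 (n k m0 m1 : ℕ) (hk1 : 1 ≤ k) (hk2 : k ≤ n - 1)
    (hm0 : m0 + k + 1 ≤ n) (hm1l : 1 ≤ m1) (hm1u : m1 + 1 ≤ k)
    (P : VPath n k m0 m1 0) (h0 : Type7 m0 m1 (P.a 0)) :
    (Out14i k m0 m1 (P.a 0) (P.a 1) ∧ ¬ Out14ii k m0 m1 (P.a 0) (P.a 1) ∧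
        ¬ Out14iii k m0 m1 (P.a 0) (P.a 1)) ∨
    (¬ Out14i k m0 m1 (P.a 0) (P.a 1) ∧ Out14ii k m0 m1 (P.a 0) (P.a 1) ∧
        ¬ Out14iii k m0 m1 (P.a 0) (P.a 1)) ∨
    (¬ Out14i k m0 m1 (P.a 0) (P.a 1) ∧ ¬ Out14ii k m0 m1 (P.a 0) (P.a 1) ∧
        Out14iii k m0 m1 (P.a 0) (P.a 1)) := by
  classical
  set S := P.a 0 with hSdef
  set T : FSeq n := P.a 1 with hTdef
  have hmem : Vmatch k m0 m1 S (P.b 0) := P.mem 0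
  have hcod : Codim1 k T (P.b 0) := P.codim_right 0
  have hne : S ≠ T := P.step_ne 0
  have hfaceT : FaceSeq k T := P.face_a 1
  obtain ⟨hfS, hdisj⟩ := hmem
  obtain ⟨hc1S, hc0S, hNOR, hZL⟩ := h0
  have hApply : Apply3 S (P.b 0) := by
    rcases hdisj with ⟨ht, _⟩ | ⟨ht, _⟩ | ⟨ht, _⟩ | ⟨_, ha⟩ | ⟨ht, _⟩
    · exfalso
      rcases ht with h | h | h <;> exact not_oneRight_noOneRight S h.2.1 hNOR
    · exfalso; have := ht.1; omega
    · exact absurd ht.2.2.1 (fun h => not_oneRight_noOneRight S h hNOR)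
    · exact ha
    · exfalso; have := ht.1; omega
  obtain ⟨z, hzLZ, hbeq⟩ := hApply
  have hz0 : S z = Letter.zero := hzLZ.1
  obtain ⟨s, hsR⟩ := exists_rightmostStar S hZL.1
  have hsstar : S s = Letter.star := hsR.1
  have hzlt : ∀ j, S j = Letter.star → z < j := by
    intro j hj
    obtain ⟨_, i, hizero, hileft⟩ := hZL
    have hzi : z ≤ i := by
      by_contra h
      exact hzLZ.2 i (not_le.mp h) hizero
    have hij : i < j := by
      rcases lt_trichotomy i j with h | h | h
      · exact h
      · exfalso; rw [h] at hizero; rw [hizero] at hj; exact absurd hj (by simp)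
      · exact absurd hj (hileft j h)
    exact lt_of_le_of_lt hzi hij
  have hzs : z < s := hzlt s hsstar
  have hone_lt : ∀ i, S i = Letter.one → i < s := by
    intro i hi
    obtain ⟨j, hij, hjs⟩ := hNOR.2 i hi
    have hjs' : j ≤ s := by
      by_contra h
      exact hsR.2 j (not_le.mp h) hjs
    exact lt_of_lt_of_le hij hjs'
  have hc0pos : 1 ≤ count0 S := count0_pos S z hz0
  have hcsS : 3 ≤ countStar S := by
    rcases hfS with h | h
    · exfalso; have := countStar_pos S s hsstar; omega
    · omega
  -- facts about B = update S z star
  have hB1 : count1 (Function.update S z Letter.star) = count1 S := by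
    have h := count1_update S z Letter.star
    simp [hz0] at h
    exact h
  have hB0 : count0 (Function.update S z Letter.star) + 1 = count0 S := by
    have h := count0_update S z Letter.star
    simp [hz0] at h
    exact h
  have hBs : countStar (Function.update S z Letter.star) = countStar S + 1 := by
    have h := countStar_update S z Letter.star
    simp [hz0] at h
    exact h
  rw [hbeq] at hcod
  obtain ⟨p, hpB, hshape⟩ := codim1_shape (Function.update S z Letter.star) T hfaceT
    (subset_of_ssubset hcod.1) hcod.2 (by omega)
  -- p = z or S p = star
  have hpcase : p = z ∨ S p = Letter.star := by
    by_cases h : p = z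
    · exact Or.inl h
    · right
      rw [Function.update_of_ne h] at hpB
      exact hpB
  -- unified description of T
  obtain ⟨v, hv01, hTs⟩ : ∃ v, (v = Letter.zero ∨ v = Letter.one) ∧
      T = Function.update (Function.update S z Letter.star) p v := by
    rcases hshape with h | h
    · exact ⟨_, Or.inl rfl, h⟩
    · exact ⟨_, Or.inr rfl, h⟩
  have hTvalj : ∀ j, j ≠ p → j ≠ z → T j = S j := by
    intro j hjp hjz
    rw [hTs, Function.update_of_ne hjp, Function.update_of_ne hjz]
  have hTp : T p = v := by rw [hTs]; simp
  have hTzstar : z ≠ p → T z = Letter.star := by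
    intro h
    rw [hTs, Function.update_of_ne h]
    simp
  have hTc1 : count1 T = count1 S + (if v = Letter.one then 1 else 0) := by
    have h := count1_update (Function.update S z Letter.star) p v
    rw [← hTs, hpB, hB1] at h
    simpa using h
  have hTc0' : count0 T = count0 (Function.update S z Letter.star)
      + (if v = Letter.zero then 1 else 0) := by
    have h := count0_update (Function.update S z Letter.star) p v
    rw [← hTs, hpB] at h
    simpa using h
  have hzlt0 : ∀ i, S i = Letter.zero → i ≠ z → z < i := by
    intro i hSi hiz
    rcases lt_trichotomy z i with h | h | h
    · exact h
    · exact absurd h.symm hiz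
    · exact absurd hSi (hzLZ.2 i h)
  have hple : ∀ (h : S p = Letter.star), p ≤ s := by
    intro h
    by_contra hc
    exact hsR.2 p (not_le.mp hc) h
  rcases hv01 with hv | hv
  · -- v = zero
    subst hv
    simp at hTc1 hTc0'
    have hc1T : count1 T + 1 = m1 := by omega
    have hc0T : count0 T = count0 S := by omega
    by_cases hpz : p = z
    · -- would give T = S, contradiction
      exfalso
      have hTSeq : T = S := by
        rw [hTs, hpz, Function.update_idem]
        conv_lhs => rw [← hz0]
        rw [Function.update_eq_self]
      exact hne hTSeq.symm
    · have hSp : S p = Letter.star := hpcase.resolve_left hpz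
      have hzp : z < p := hzlt p hSp
      have hTz : T z = Letter.star := hTzstar (ne_of_lt hzp)
      have hNZL : NoZeroLeft T := by
        refine ⟨⟨z, hTz⟩, ?_⟩
        intro i hi
        by_cases hip : i = p
        · exact ⟨z, by rw [hip]; exact hzp, hTz⟩
        · have hiz : i ≠ z := by
            intro h
            rw [h, hTz] at hi
            simp at hi
          have hSi : S i = Letter.zero := by rw [← hTvalj i hip hiz]; exact hi
          exact ⟨z, hzlt0 i hSi hiz, hTz⟩
      by_cases hps : p = s
      · -- outcome (i)
        have hval : T s = Letter.zero := by rw [← hps]; exact hTp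
        have htype : Type1 k m0 m1 T ∨ Type2 k m0 m1 T ∨ Type8 m0 m1 T := by
          rcases oneRight_dichotomy T ⟨z, hTz⟩ with hOR | hNOR'
          · exact Or.inl (Or.inl ⟨by omega, hOR, by omega⟩)
          · rcases classify_m1m1 T hm1u hc1T (show count0 T ≤ m0 by omega) hNOR' hNZL with h | h
            · exact Or.inr (Or.inl h)
            · exact Or.inr (Or.inr h)
        refine Or.inl ⟨⟨htype, s, hsR, hval⟩, ?_, ?_⟩
        · rintro ⟨-, i, hiS, hiv⟩
          rw [rightmostStar_unique hiS hsR] at hiv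
          have h1 := hiv.1
          rw [hval] at h1
          simp at h1
        · rintro ⟨-, i, hiS, hiv⟩
          rw [rightmostStar_unique hiS hsR, hval] at hiv
          simp at hiv
      · -- outcome (ii)
        have hplt : p < s := lt_of_le_of_ne (hple hSp) hps
        have hTsstar : T s = Letter.star := by
          rw [hTvalj s (Ne.symm hps) (ne_of_gt hzs)]; exact hsstar
        have hRmT : IsRightmostStar T s := by
          refine ⟨hTsstar, ?_⟩
          intro j hj
          rw [hTvalj j (ne_of_gt (lt_trans hplt hj)) (ne_of_gt (lt_trans hzs hj))]
          exact hsR.2 j hj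
        have hNOR' : NoOneRight T := by
          refine ⟨⟨s, hTsstar⟩, ?_⟩
          intro i hi
          have hip : i ≠ p := by
            intro h
            rw [h, hTp] at hi
            simp at hi
          have hiz : i ≠ z := by
            intro h
            rw [h, hTz] at hi
            simp at hi
          have hSi : S i = Letter.one := by rw [← hTvalj i hip hiz]; exact hi
          exact ⟨s, hone_lt i hSi, hTsstar⟩
        have htype : Type2 k m0 m1 T ∨ Type3 k T ∨ Type4 k T ∨ Type8 m0 m1 T ∨
            Type10 k T := by
          rcases classify_m1m1 T hm1u hc1T (show count0 T ≤ m0 by omega) hNOR' hNZL with h | h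
          · exact Or.inl h
          · exact Or.inr (Or.inr (Or.inr (Or.inl h)))
        refine Or.inr (Or.inl ⟨?_, ⟨htype, s, hsR, hRmT⟩, ?_⟩)
        · rintro ⟨-, i, hiS, hiv⟩
          rw [rightmostStar_unique hiS hsR, hTsstar] at hiv
          simp at hiv
        · rintro ⟨-, i, hiS, hiv⟩
          rw [rightmostStar_unique hiS hsR, hTsstar] at hiv
          simp at hiv
  · -- v = one
    subst hv
    simp at hTc1 hTc0'
    have hc1T : count1 T = m1 := by omega
    have hc0T : count0 T < m0 := by omega
    by_cases hpz : p = z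
    · -- outcome (ii), p = z replaced by 1
      have hTsstar : T s = Letter.star := by
        rw [hTvalj s (by rw [hpz]; exact ne_of_gt hzs) (ne_of_gt hzs)]; exact hsstar
      have hRmT : IsRightmostStar T s := by
        refine ⟨hTsstar, ?_⟩
        intro j hj
        rw [hTvalj j (by rw [hpz]; exact ne_of_gt (lt_trans hzs hj))
          (ne_of_gt (lt_trans hzs hj))]
        exact hsR.2 j hj
      have hNOR' : NoOneRight T := by
        refine ⟨⟨s, hTsstar⟩, ?_⟩
        intro i hi
        by_cases hip : i = p
        · exact ⟨s, by rw [hip, hpz]; exact hzs, hTsstar⟩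
        · have hiz : i ≠ z := by rw [← hpz]; exact hip
          have hSi : S i = Letter.one := by rw [← hTvalj i hip hiz]; exact hi
          exact ⟨s, hone_lt i hSi, hTsstar⟩
      have htype : Type2 k m0 m1 T ∨ Type3 k T ∨ Type4 k T ∨ Type8 m0 m1 T ∨
          Type10 k T := by
        rcases classify_m1 T hm1u hm0 hc1T hc0T hNOR' ⟨s, hTsstar⟩ with h | h | h
        · exact Or.inl h
        · exact Or.inr (Or.inl h)
        · exact Or.inr (Or.inr (Or.inl h))
      refine Or.inr (Or.inl ⟨?_, ⟨htype, s, hsR, hRmT⟩, ?_⟩)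
      · rintro ⟨-, i, hiS, hiv⟩
        rw [rightmostStar_unique hiS hsR, hTsstar] at hiv
        simp at hiv
      · rintro ⟨-, i, hiS, hiv⟩
        rw [rightmostStar_unique hiS hsR, hTsstar] at hiv
        simp at hiv
    · have hSp : S p = Letter.star := hpcase.resolve_left hpz
      have hzp : z < p := hzlt p hSp
      have hTz : T z = Letter.star := hTzstar (ne_of_lt hzp)
      by_cases hps : p = s
      · -- outcome (iii)
        have hval : T s = Letter.one := by rw [← hps]; exact hTp
        have hOR : OneRight T := by
          refine ⟨⟨z, hTz⟩, s, hval, ?_⟩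
          intro j hj hstar
          rw [hTvalj j (by rw [hps]; exact ne_of_gt hj) (ne_of_gt (lt_trans hzs hj))]
            at hstar
          exact hsR.2 j hj hstar
        have hNZL : NoZeroLeft T := by
          refine ⟨⟨z, hTz⟩, ?_⟩
          intro i hi
          have hip : i ≠ p := by
            intro h
            rw [h, hTp] at hi
            simp at hi
          have hiz : i ≠ z := by
            intro h
            rw [h, hTz] at hi
            simp at hi
          have hSi : S i = Letter.zero := by rw [← hTvalj i hip hiz]; exact hi
          exact ⟨z, hzlt0 i hSi hiz, hTz⟩
        have htype : Type6 m0 m1 T := ⟨hc1T, hc0T, hOR, hNZL⟩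
        refine Or.inr (Or.inr ⟨?_, ?_, htype, s, hsR, hval⟩)
        · rintro ⟨-, i, hiS, hiv⟩
          rw [rightmostStar_unique hiS hsR, hval] at hiv
          simp at hiv
        · rintro ⟨-, i, hiS, hiv⟩
          rw [rightmostStar_unique hiS hsR] at hiv
          have h1 := hiv.1
          rw [hval] at h1
          simp at h1
      · -- outcome (ii)
        have hplt : p < s := lt_of_le_of_ne (hple hSp) hps
        have hTsstar : T s = Letter.star := by
          rw [hTvalj s (Ne.symm hps) (ne_of_gt hzs)]; exact hsstar
        have hRmT : IsRightmostStar T s := by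
          refine ⟨hTsstar, ?_⟩
          intro j hj
          rw [hTvalj j (ne_of_gt (lt_trans hplt hj)) (ne_of_gt (lt_trans hzs hj))]
          exact hsR.2 j hj
        have hNOR' : NoOneRight T := by
          refine ⟨⟨s, hTsstar⟩, ?_⟩
          intro i hi
          by_cases hip : i = p
          · exact ⟨s, by rw [hip]; exact hplt, hTsstar⟩
          · have hiz : i ≠ z := by
              intro h
              rw [h, hTz] at hi
              simp at hi
            have hSi : S i = Letter.one := by rw [← hTvalj i hip hiz]; exact hi
            exact ⟨s, hone_lt i hSi, hTsstar⟩
        have htype : Type2 k m0 m1 T ∨ Type3 k T ∨ Type4 k T ∨ Type8 m0 m1 T ∨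
            Type10 k T := by
          rcases classify_m1 T hm1u hm0 hc1T hc0T hNOR' ⟨s, hTsstar⟩ with h | h | h
          · exact Or.inl h
          · exact Or.inr (Or.inl h)
          · exact Or.inr (Or.inr (Or.inl h))
        refine Or.inr (Or.inl ⟨?_, ⟨htype, s, hsR, hRmT⟩, ?_⟩)
        · rintro ⟨-, i, hiS, hiv⟩
          rw [rightmostStar_unique hiS hsR, hTsstar] at hiv
          simp at hiv
        · rintro ⟨-, i, hiS, hiv⟩
          rw [rightmostStar_unique hiS hsR, hTsstar] at hiv
          simp at hiv
end

section
/- Let a₀, b₀, a₁, …, b_r, a_{r+1} be a V-path such that a₀ = S is a face sequence of type 1, and write a_j = S⁽ʲ⁾ for each j ≥ 0. If for some j with 1 ≤ j ≤ r+1 the sequence S⁽ʲ⁾ has a 0 at the position of the rightmost 1 of S, then a₀ ≠ a_{r+1}. -/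
set_option linter.unusedVariables false

section Aux

open Finset

variable {n k m0 m1 : ℕ}

lemma letter_eq_zero {l : Letter} (h1 : l ≠ Letter.one) (hs : l ≠ Letter.star) :
    l = Letter.zero := by cases l <;> simp_all

lemma letter_eq_one {l : Letter} (h0 : l ≠ Letter.zero) (hs : l ≠ Letter.star) :
    l = Letter.one := by cases l <;> simp_all

lemma count_sum (S : FSeq n) : count0 S + count1 S + countStar S = n := by
  classical
  have hu : (univ.filter fun p => S p = Letter.zero) ∪
      ((univ.filter fun p => S p = Letter.one) ∪ (univ.filter fun p => S p = Letter.star))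
      = (univ : Finset (Fin n)) := by
    ext p
    simp only [mem_union, mem_filter, mem_univ, true_and, iff_true]
    cases S p <;> simp
  have d1 : Disjoint (univ.filter fun p => S p = Letter.one)
      (univ.filter fun p => S p = Letter.star) := by
    rw [Finset.disjoint_left]
    intro p hp hq
    simp only [mem_filter] at hp hq
    rw [hp.2] at hq
    exact absurd hq.2 (by simp)
  have d2 : Disjoint (univ.filter fun p => S p = Letter.zero)
      ((univ.filter fun p => S p = Letter.one) ∪ (univ.filter fun p => S p = Letter.star)) := by
    rw [Finset.disjoint_left]
    intro p hp hq
    simp only [mem_union, mem_filter] at hp hq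
    rcases hq with hq | hq <;> rw [hp.2] at hq <;> exact absurd hq.2 (by simp)
  have hc := congrArg Finset.card hu
  rw [Finset.card_union_of_disjoint d2, Finset.card_union_of_disjoint d1] at hc
  simpa [count0, count1, countStar, Nat.add_assoc] using hc

lemma countStar_eq_zero {S : FSeq n} (h : countStar S = 0) : ∀ p, S p ≠ Letter.star := by
  intro p hp
  have hm : p ∈ univ.filter fun q => S q = Letter.star := by simp [hp]
  rw [Finset.card_eq_zero.mp h] at hm
  exact absurd hm (by simp)

/-- The 0/1 sequence obtained from `T` by setting the stars in `A` to `1` and all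
other stars to `0`. -/
def fillV {n : ℕ} (T : FSeq n) (A : Finset (Fin n)) : FSeq n :=
  fun p => if T p = Letter.one ∨ p ∈ A then Letter.one else Letter.zero

lemma fillV_mem {T : FSeq n} {A : Finset (Fin n)}
    (hA : ∀ p ∈ A, T p = Letter.star) (hcard : count1 T + A.card = k) :
    fillV T A ∈ VertexSet k T := by
  refine ⟨fun p => ?_, ?_, fun p hp => ?_⟩
  · unfold fillV; split <;> simp
  · have hset : (univ.filter fun p => fillV T A p = Letter.one)
        = (univ.filter fun p => T p = Letter.one) ∪ A := by
      ext p
      simp only [mem_filter, mem_univ, true_and, mem_union, fillV]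
      by_cases h : T p = Letter.one ∨ p ∈ A <;> simp [h] <;> tauto
    have hd : Disjoint (univ.filter fun p => T p = Letter.one) A := by
      rw [Finset.disjoint_left]
      intro p hp hq
      simp only [mem_filter] at hp
      rw [hA p hq] at hp
      exact absurd hp.2 (by simp)
    rw [count1, hset, Finset.card_union_of_disjoint hd]
    exact hcard
  · by_cases h1 : T p = Letter.one
    · simp [fillV, h1]
    · have hpA : p ∉ A := fun hm => hp (hA p hm)
      have hz : T p = Letter.zero := letter_eq_zero h1 hp
      simp [fillV, h1, hpA, hz]

lemma star_count_bounds {T : FSeq n} (hT : FaceSeq k T) {q : Fin n}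
    (hq : T q = Letter.star) : count1 T + 1 ≤ k ∧ k + 1 ≤ count1 T + countStar T := by
  rcases hT with ⟨h0, _⟩ | h
  · exact absurd hq (countStar_eq_zero h0 q)
  · exact h

lemma vertexSet_nonempty {T : FSeq n} (hT : FaceSeq k T) : ∃ v, v ∈ VertexSet k T := by
  classical
  have hsub : ∀ A : Finset (Fin n), A ⊆ (univ.filter fun p => T p = Letter.star) →
      ∀ p ∈ A, T p = Letter.star := by
    intro A hA p hp
    have hm := hA hp
    simp only [mem_filter] at hm
    exact hm.2
  rcases hT with ⟨h0, h1⟩ | ⟨h1, h2⟩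
  · exact ⟨fillV T ∅, fillV_mem (by simp) (by simpa using h1)⟩
  · have hle : k - count1 T ≤ (univ.filter fun p => T p = Letter.star).card := by
      have he : (univ.filter fun p => T p = Letter.star).card = countStar T := rfl
      omega
    obtain ⟨A, hA, hAcard⟩ := Finset.exists_subset_card_eq hle
    exact ⟨fillV T A, fillV_mem (hsub A hA) (by omega)⟩

lemma exists_vertex_one {T : FSeq n} (hT : FaceSeq k T) {q : Fin n}
    (hq : T q = Letter.star) : ∃ v ∈ VertexSet k T, v q = Letter.one := by
  classical
  obtain ⟨hb1, hb2⟩ := star_count_bounds hT hq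
  have hqmem : q ∈ univ.filter fun p => T p = Letter.star := by simp [hq]
  have hcard : ((univ.filter fun p => T p = Letter.star).erase q).card = countStar T - 1 := by
    rw [Finset.card_erase_of_mem hqmem]; rfl
  have hle : k - 1 - count1 T ≤ ((univ.filter fun p => T p = Letter.star).erase q).card := by
    omega
  obtain ⟨A, hA, hAcard⟩ := Finset.exists_subset_card_eq hle
  have hqA : q ∉ A := fun h => (Finset.notMem_erase q _) (hA h)
  have hstars : ∀ p ∈ insert q A, T p = Letter.star := by
    intro p hp
    rcases Finset.mem_insert.mp hp with rfl | hp
    · exact hq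
    · have hm := (Finset.mem_erase.mp (hA hp)).2
      simp only [mem_filter] at hm
      exact hm.2
  refine ⟨fillV T (insert q A), fillV_mem hstars ?_, ?_⟩
  · rw [Finset.card_insert_of_notMem hqA]; omega
  · simp [fillV]

lemma exists_vertex_zero {T : FSeq n} (hT : FaceSeq k T) {q : Fin n}
    (hq : T q = Letter.star) : ∃ v ∈ VertexSet k T, v q = Letter.zero := by
  classical
  obtain ⟨hb1, hb2⟩ := star_count_bounds hT hq
  have hqmem : q ∈ univ.filter fun p => T p = Letter.star := by simp [hq]
  have hcard : ((univ.filter fun p => T p = Letter.star).erase q).card = countStar T - 1 := by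
    rw [Finset.card_erase_of_mem hqmem]; rfl
  have hle : k - count1 T ≤ ((univ.filter fun p => T p = Letter.star).erase q).card := by
    omega
  obtain ⟨A, hA, hAcard⟩ := Finset.exists_subset_card_eq hle
  have hqA : q ∉ A := fun h => (Finset.notMem_erase q _) (hA h)
  have hstars : ∀ p ∈ A, T p = Letter.star := by
    intro p hp
    have hm := (Finset.mem_erase.mp (hA hp)).2
    simp only [mem_filter] at hm
    exact hm.2
  refine ⟨fillV T A, fillV_mem hstars (by omega), ?_⟩
  have hno : ¬ (T q = Letter.one ∨ q ∈ A) := by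
    rintro (h | h)
    · rw [hq] at h; exact absurd h (by simp)
    · exact hqA h
  simp only [fillV, if_neg hno]

lemma vsubset_agree {T S : FSeq n} (hT : FaceSeq k T)
    (hsub : VertexSet k T ⊆ VertexSet k S) {q : Fin n} (hq : S q ≠ Letter.star) :
    T q = S q := by
  by_cases h : T q = Letter.star
  · obtain ⟨v1, hv1, h1⟩ := exists_vertex_one hT h
    obtain ⟨v0, hv0, h0⟩ := exists_vertex_zero hT h
    have e1 : v1 q = S q := (hsub hv1).2.2 q hq
    have e0 : v0 q = S q := (hsub hv0).2.2 q hq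
    rw [h1] at e1
    rw [h0] at e0
    rw [← e0] at e1
    exact absurd e1 (by simp)
  · obtain ⟨v, hv⟩ := vertexSet_nonempty hT
    have h1 : v q = T q := hv.2.2 q h
    have h2 : v q = S q := (hsub hv).2.2 q hq
    rw [← h1, h2]

/-- All positions strictly to the right of `i` carry a `0`. -/
def Zafter {n : ℕ} (i : Fin n) (S : FSeq n) : Prop :=
  ∀ q, i < q → S q = Letter.zero

lemma zafter_one_le {i : Fin n} {A : FSeq n} (hZ : Zafter i A) {p : Fin n}
    (hp : A p = Letter.one) : ¬ i < p := by
  intro h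
  rw [hZ p h] at hp
  exact absurd hp (by simp)

lemma apply3_aux {i p : Fin n} {A : FSeq n} (hZ : Zafter i A) (hZL : ZeroLeft A)
    (hp : IsLeftmostZero A p) : ¬ i < p ∧ (A i = Letter.zero → p ≠ i) := by
  obtain ⟨⟨s, hs⟩, z, hz0, hzs⟩ := hZL
  have hsle : ¬ i < s := by
    intro h
    rw [hZ s h] at hs
    exact absurd hs (by simp)
  constructor
  · intro hip
    have hpz : ¬ z < p := fun h => hp.2 z h hz0
    have hsz : s < z := by
      have h1 : (s : ℕ) ≤ i := not_lt.mp hsle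
      have h2 : (i : ℕ) < p := hip
      have h3 : (p : ℕ) ≤ z := not_lt.mp hpz
      exact Fin.lt_def.mpr (by omega)
    exact hzs s hsz hs
  · intro hAi hpi
    subst hpi
    have hpz : ¬ z < p := fun h => hp.2 z h hz0
    have hsne : (s : ℕ) ≠ p := by
      intro h
      rw [Fin.ext h, hAi] at hs
      exact absurd hs (by simp)
    have hsz : s < z := by
      have h1 : (s : ℕ) ≤ p := not_lt.mp hsle
      have h3 : (p : ℕ) ≤ z := not_lt.mp hpz
      exact Fin.lt_def.mpr (by omega)
    exact hzs s hsz hs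

lemma count1_eq_of_iff_le {A : FSeq n} (i : Fin n)
    (hiff : ∀ w : Fin n, A w = Letter.one ↔ (w : ℕ) ≤ (i : ℕ)) :
    count1 A = (i : ℕ) + 1 := by
  have hfil : (univ.filter fun w => A w = Letter.one) = Finset.Iic i := by
    ext w
    simp only [mem_filter, mem_univ, true_and, Finset.mem_Iic]
    rw [hiff w, Fin.le_def]
  rw [count1, hfil, Fin.card_Iic]

lemma count1_eq_of_iff_lt {A : FSeq n} (i : Fin n)
    (hiff : ∀ w : Fin n, A w = Letter.one ↔ (w : ℕ) < (i : ℕ)) :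
    count1 A = (i : ℕ) := by
  have hfil : (univ.filter fun w => A w = Letter.one) = Finset.Iio i := by
    ext w
    simp only [mem_filter, mem_univ, true_and, Finset.mem_Iio]
    rw [hiff w, Fin.lt_def]
  rw [count1, hfil, Fin.card_Iio]

lemma eq_v0_of_iff {A : FSeq n} (hns : ∀ w, A w ≠ Letter.star)
    (hiff : ∀ w : Fin n, A w = Letter.one ↔ (w : ℕ) < k) : A = v0seq n k := by
  funext w
  unfold v0seq
  by_cases h : (w : ℕ) < k
  · rw [if_pos h]
    exact (hiff w).mpr h
  · rw [if_neg h]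
    exact letter_eq_zero (fun hh => h ((hiff w).mp hh)) (hns w)

lemma update_step {i p : Fin n} {A : FSeq n} (c : Letter) (hZ : Zafter i A) (hple : ¬ i < p)
    (hne : A i = Letter.zero → p ≠ i) :
    Zafter i (Function.update A p c) ∧
      (A i = Letter.zero → Function.update A p c i = Letter.zero) := by
  constructor
  · intro q hq
    have hqp : q ≠ p := by
      intro h
      subst h
      exact hple hq
    rw [Function.update_of_ne hqp]
    exact hZ q hq
  · intro h
    rw [Function.update_of_ne (Ne.symm (hne h))]
    exact h

lemma vmatch_step {i : Fin n} {A B : FSeq n} (hV : Vmatch k m0 m1 A B)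
    (hZ : Zafter i A) :
    Zafter i B ∧ (A i = Letter.zero → B i = Letter.zero) := by
  rcases hV.2 with ⟨ht, p, hp, rfl⟩ | ⟨ht, p, hp, rfl⟩ | ⟨ht, p, hp, rfl⟩ |
    ⟨ht, p, hp, rfl⟩ | ⟨ht, p, q', hp, hq', rfl⟩
  · -- rule 1: star the rightmost one
    refine update_step _ hZ (zafter_one_le hZ hp.1) ?_
    intro h hpe
    subst hpe
    rw [hp.1] at h
    exact absurd h (by simp)
  · obtain ⟨h1, h2⟩ := apply3_aux hZ ht.2.2.2 hp
    exact update_step _ hZ h1 h2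
  · obtain ⟨h1, h2⟩ := apply3_aux hZ ht.2.2.2 hp
    exact update_step _ hZ h1 h2
  · obtain ⟨h1, h2⟩ := apply3_aux hZ ht.2.2.2 hp
    exact update_step _ hZ h1 h2
  · -- rule 9
    obtain ⟨h1c, h0c, hnev0⟩ := ht
    have hstar0 : countStar A = 0 := by
      have := count_sum A
      omega
    have hns : ∀ w, A w ≠ Letter.star := countStar_eq_zero hstar0
    have hqle : ¬ i < q' := zafter_one_le hZ hq'.1
    have hple : ¬ i < p := by
      intro hip
      have hiff : ∀ w : Fin n, A w = Letter.one ↔ (w : ℕ) ≤ (i : ℕ) := by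
        intro w
        constructor
        · intro hw
          exact not_lt.mp (fun h => zafter_one_le hZ hw (Fin.lt_def.mpr h))
        · intro hw
          have hwp : w < p := Fin.lt_def.mpr (by
            have := Fin.lt_def.mp hip
            omega)
          exact letter_eq_one (hp.2 w hwp) (hns w)
      have hcnt := count1_eq_of_iff_le i hiff
      have hk : k = (i : ℕ) + 1 := by omega
      refine hnev0 (eq_v0_of_iff hns ?_)
      intro w
      rw [hiff w, hk]
      omega
    have hne : A i = Letter.zero → p ≠ i := by
      intro hAi hpe
      subst hpe
      have hiff : ∀ w : Fin n, A w = Letter.one ↔ (w : ℕ) < (p : ℕ) := by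
        intro w
        constructor
        · intro hw
          have h1 : ¬ (p : ℕ) < (w : ℕ) := fun h => zafter_one_le hZ hw (Fin.lt_def.mpr h)
          have h2 : (w : ℕ) ≠ (p : ℕ) := by
            intro h
            rw [Fin.ext h, hAi] at hw
            exact absurd hw (by simp)
          omega
        · intro hw
          exact letter_eq_one (hp.2 w (Fin.lt_def.mpr hw)) (hns w)
      have hcnt := count1_eq_of_iff_lt p hiff
      have hk : k = (p : ℕ) := by omega
      refine hnev0 (eq_v0_of_iff hns ?_)
      intro w
      rw [hiff w, hk]
    have hq'ne : A i = Letter.zero → q' ≠ i := by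
      intro hAi hqe
      subst hqe
      rw [hq'.1] at hAi
      exact absurd hAi (by simp)
    obtain ⟨hZ1, hK1⟩ := update_step Letter.star hZ hple hne
    have hne2 : Function.update A p Letter.star i = Letter.zero → q' ≠ i := by
      intro h hqe
      subst hqe
      by_cases hpq : q' = p
      · rw [hpq, Function.update_self] at h
        exact absurd h (by simp)
      · rw [Function.update_of_ne hpq, hq'.1] at h
        exact absurd h (by simp)
    obtain ⟨hZ2, hK2⟩ := update_step Letter.star hZ1 hqle hne2
    exact ⟨hZ2, fun h => hK2 (hK1 h)⟩

end Aux

/-- Let `a₀, b₀, a₁, …, b_r, a_{r+1}` be a `V`-path with `a₀` of type 1.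
If for some `j ≥ 1` the sequence `a_j` has a `0` at the position of the rightmost `1` of
`a₀`, then `a₀ ≠ a_{r+1}`. -/
theorem vpath_type1_zero_fixed (n k m0 m1 : ℕ) (hk1 : 1 ≤ k) (hk2 : k ≤ n - 1)
    (hm0 : m0 + k + 1 ≤ n) (hm1l : 1 ≤ m1) (hm1u : m1 + 1 ≤ k) (r : ℕ)
    (P : VPath n k m0 m1 r) (h0 : Type1 k m0 m1 (P.a 0))
    (hj : ∃ j : Fin (r + 2), j ≠ 0 ∧
      ∃ i, IsRightmostOne (P.a 0) i ∧ P.a j i = Letter.zero) :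
    P.a 0 ≠ P.a (Fin.last (r + 1)) := by
  classical
  obtain ⟨j0, hj0ne, i, hi_rm, hi0⟩ := hj
  have hj0pos : 0 < (j0 : ℕ) :=
    Nat.pos_of_ne_zero (fun h => hj0ne (Fin.ext h))
  have hbase : Zafter i (P.a 0) := by
    have hOR : OneRight (P.a 0) := by
      rcases h0 with ⟨_, hOR, _⟩ | ⟨_, hOR, _⟩ | ⟨_, hOR, _⟩ <;> exact hOR
    obtain ⟨hS, p, hp1, hpns⟩ := hOR
    intro q hq
    have hqone : P.a 0 q ≠ Letter.one := fun h => hi_rm.2 q hq h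
    have hple : ¬ i < p := fun h => hi_rm.2 p h hp1
    have hqstar : P.a 0 q ≠ Letter.star := hpns q (lt_of_le_of_lt (not_lt.mp hple) hq)
    exact letter_eq_zero hqone hqstar
  have key : ∀ j : ℕ, ∀ hlt : j < r + 2,
      Zafter i (P.a ⟨j, hlt⟩) ∧ ((j0 : ℕ) ≤ j → P.a ⟨j, hlt⟩ i = Letter.zero) := by
    intro j
    induction j with
    | zero =>
      intro hlt
      exact ⟨hbase, fun h => absurd h (by omega)⟩
    | succ j ih =>
      intro hlt
      have hj' : j < r + 2 := by omega
      have hjr : j < r + 1 := by omega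
      obtain ⟨ihZ, ihK⟩ := ih hj'
      have hca : (⟨j, hjr⟩ : Fin (r + 1)).castSucc = (⟨j, hj'⟩ : Fin (r + 2)) := rfl
      have hsu : (⟨j, hjr⟩ : Fin (r + 1)).succ = (⟨j + 1, hlt⟩ : Fin (r + 2)) := rfl
      have hV := P.mem ⟨j, hjr⟩
      rw [hca] at hV
      have hstep := vmatch_step hV ihZ
      have hsub : VertexSet k (P.a (⟨j, hjr⟩ : Fin (r + 1)).succ) ⊆
          VertexSet k (P.b ⟨j, hjr⟩) := (P.codim_right ⟨j, hjr⟩).1.subset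
      have hfa := P.face_a (⟨j, hjr⟩ : Fin (r + 1)).succ
      have htrans : ∀ q : Fin n, P.b ⟨j, hjr⟩ q = Letter.zero →
          P.a (⟨j, hjr⟩ : Fin (r + 1)).succ q = Letter.zero := by
        intro q hq
        have he := vsubset_agree hfa hsub (q := q) (by rw [hq]; simp)
        rw [he, hq]
      rw [hsu] at htrans
      constructor
      · intro q hq
        exact htrans q (hstep.1 q hq)
      · intro hle
        by_cases hj0 : (j0 : ℕ) ≤ j
        · exact htrans i (hstep.2 (ihK hj0))
        · have hv : (j0 : ℕ) = j + 1 := by omega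
          have he : j0 = (⟨j + 1, hlt⟩ : Fin (r + 2)) := Fin.ext hv
          rw [← he]
          exact hi0
  have hj0le : (j0 : ℕ) ≤ r + 1 := by
    have := j0.isLt
    omega
  have hlast : P.a ⟨r + 1, by omega⟩ i = Letter.zero :=
    (key (r + 1) (by omega)).2 hj0le
  intro heq
  have h1 : P.a 0 i = Letter.one := hi_rm.1
  rw [heq] at h1
  have heq2 : Fin.last (r + 1) = (⟨r + 1, by omega⟩ : Fin (r + 2)) := rfl
  rw [heq2, hlast] at h1
  exact absurd h1 (by simp)
end

section
/- There is no nontrivial closed V-path a₀, b₀, a₁, …, b_r, a_{r+1} in which a₀ is a vertex, i.e., a face sequence containing no ∗. -/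
set_option linter.unusedVariables false

/-- Weight of a sequence: sum of positions of its `1`'s. -/
def wt {n : ℕ} (S : FSeq n) : ℕ :=
  ∑ x ∈ Finset.univ.filter (fun x => S x = Letter.one), (x : ℕ)

lemma noStar_of {n : ℕ} {S : FSeq n} (h : countStar S = 0) : ∀ x, S x ≠ Letter.star := by
  intro x hx
  have hmem : x ∈ (Finset.univ.filter fun i => S i = Letter.star) := by simp [hx]
  rw [Finset.card_eq_zero.mp h] at hmem
  exact absurd hmem (Finset.notMem_empty x)

lemma count1_of_noStar {n k : ℕ} {S : FSeq n} (hS : FaceSeq k S) (h : countStar S = 0) :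
    count1 S = k := by
  rcases hS with ⟨_, h1⟩ | ⟨h1, h2⟩
  · exact h1
  · omega

lemma key_step {n k m0 m1 : ℕ} (hk1 : 1 ≤ k) {S S' T : FSeq n}
    (hS0 : countStar S = 0) (hV : Vmatch k m0 m1 S S')
    (hT : FaceSeq k T) (hC : Codim1 k T S') (hne : T ≠ S) :
    countStar T = 0 ∧ wt T < wt S := by
  have hnoStar := noStar_of hS0
  obtain ⟨hFS, hcase⟩ := hV
  -- only type 9 is possible
  have h9 : Type9 k S ∧ Apply9 S S' := by
    rcases hcase with ⟨h1, _⟩ | ⟨h3, _⟩ | ⟨h5, _⟩ | ⟨h7, _⟩ | h9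
    · rcases h1 with ⟨_, ⟨⟨x, hx⟩, _⟩, _⟩ | ⟨_, ⟨⟨x, hx⟩, _⟩, _⟩ | ⟨_, ⟨⟨x, hx⟩, _⟩, _⟩ <;>
        exact absurd hx (hnoStar x)
    · obtain ⟨x, hx⟩ := h3.2.2.2.1
      exact absurd hx (hnoStar x)
    · obtain ⟨x, hx⟩ := h5.2.2.1.1
      exact absurd hx (hnoStar x)
    · obtain ⟨x, hx⟩ := h7.2.2.1.1
      exact absurd hx (hnoStar x)
    · exact h9
  obtain ⟨⟨hk9, hc09, hv0⟩, i, j, hi, hj, hS'⟩ := h9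
  have hij0 : i ≠ j := by
    intro h
    subst h
    exact absurd (hi.1.symm.trans hj.1) (by simp)
  -- i < j
  have hij : i < j := by
    by_contra hlt
    have hji : j < i := lt_of_le_of_ne (not_lt.mp hlt) (Ne.symm hij0)
    have Sone : ∀ x, S x = Letter.one ↔ x ≤ j := by
      intro x
      constructor
      · intro hx
        by_contra hc
        exact hj.2 x (not_le.mp hc) hx
      · intro hx
        have hxi : x < i := lt_of_le_of_lt hx hji
        have h1 := hi.2 x hxi
        have h2 := hnoStar x
        cases hxs : S x with
        | zero => exact absurd hxs h1
        | one => rfl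
        | star => exact absurd hxs h2
    have hA : (Finset.univ.filter fun x => S x = Letter.one) = Finset.Iic j := by
      ext x; simp [Sone x]
    have hcard : count1 S = (j : ℕ) + 1 := by
      rw [count1, hA, Fin.card_Iic]
    have hkj : k = (j : ℕ) + 1 := by omega
    apply hv0
    funext x
    by_cases hx : x ≤ j
    · rw [(Sone x).mpr hx, v0seq, if_pos (by rw [hkj]; exact Nat.lt_succ_of_le (Fin.le_def.mp hx))]
    · have h1 : S x ≠ Letter.one := fun h => hx ((Sone x).mp h)
      have hz : S x = Letter.zero := by
        cases hxs : S x with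
        | zero => rfl
        | one => exact absurd hxs h1
        | star => exact absurd hxs (hnoStar x)
      rw [hz, v0seq, if_neg (by rw [hkj]; exact fun h => hx (Fin.le_def.mpr (Nat.lt_succ_iff.mp h)))]
  -- values of S'
  have hS'i : S' i = Letter.star := by
    rw [hS', Function.update_of_ne hij0, Function.update_self]
  have hS'j : S' j = Letter.star := by
    rw [hS', Function.update_self]
  have hS'x : ∀ x, x ≠ i → x ≠ j → S' x = S x := by
    intro x hxi hxj
    rw [hS', Function.update_of_ne hxj, Function.update_of_ne hxi]
  -- countStar S' = 2
  have hstars : (Finset.univ.filter fun x => S' x = Letter.star) = {i, j} := by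
    ext x
    simp only [Finset.mem_filter, Finset.mem_univ, true_and, Finset.mem_insert,
      Finset.mem_singleton]
    constructor
    · intro hx
      by_contra hc
      push_neg at hc
      rw [hS'x x hc.1 hc.2] at hx
      exact hnoStar x hx
    · rintro (rfl | rfl)
      · exact hS'i
      · exact hS'j
  have hcS' : countStar S' = 2 := by
    rw [countStar, hstars, Finset.card_insert_of_notMem (by simpa using hij0),
      Finset.card_singleton]
  have hfdimS' : fdim S' = 1 := by rw [fdim, hcS']; simp
  -- fdim T = 0, hence T is a vertex
  have hfdimT : fdim T = 0 := by
    have := hC.2; omega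
  have hT0 : countStar T = 0 := by
    by_contra hc
    rw [fdim, if_neg hc] at hfdimT
    have h1 : countStar T = 1 := by omega
    rcases hT with ⟨h2, _⟩ | ⟨h2, h3⟩
    · exact hc h2
    · omega
  have hTnoStar := noStar_of hT0
  have hT1 : count1 T = k := count1_of_noStar hT hT0
  -- T ∈ VertexSet k S'
  have hTmem : T ∈ VertexSet k S' := by
    apply hC.1.subset
    exact ⟨hTnoStar, hT1, fun x _ => rfl⟩
  obtain ⟨-, -, hcomp⟩ := hTmem
  have hTx : ∀ x, x ≠ i → x ≠ j → T x = S x := by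
    intro x hxi hxj
    rw [← hS'x x hxi hxj]
    exact hcomp x (by rw [hS'x x hxi hxj]; exact hnoStar x)
  -- set of ones of S
  set A := Finset.univ.filter (fun x => S x = Letter.one) with hAdef
  have hAmem : ∀ x, x ∈ A ↔ S x = Letter.one := by
    intro x; rw [hAdef]; simp
  have hjA : j ∈ A := (hAmem j).mpr hj.1
  have hiA : i ∉ A := fun h => by
    have := (hAmem i).mp h
    rw [hi.1] at this
    exact absurd this (by simp)
  have hcardA : A.card = k := hk9
  -- case analysis on T i, T j
  cases hti : T i with
  | star => exact absurd hti (hTnoStar i)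
  | zero =>
    cases htj : T j with
    | star => exact absurd htj (hTnoStar j)
    | one =>
      exfalso
      apply hne
      funext x
      by_cases hxi : x = i
      · rw [hxi, hti, hi.1]
      · by_cases hxj : x = j
        · rw [hxj, htj, hj.1]
        · exact hTx x hxi hxj
    | zero =>
      exfalso
      have hB : (Finset.univ.filter fun x => T x = Letter.one) = A.erase j := by
        ext x
        simp only [Finset.mem_filter, Finset.mem_univ, true_and, Finset.mem_erase, hAmem]
        by_cases hxi : x = i
        · subst hxi; simp [hti, hi.1]
        · by_cases hxj : x = j
          · subst hxj; simp [htj]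
          · rw [hTx x hxi hxj]; simp [hxj]
      have hc := hT1
      rw [count1, hB, Finset.card_erase_of_mem hjA, hcardA] at hc
      omega
  | one =>
    cases htj : T j with
    | star => exact absurd htj (hTnoStar j)
    | one =>
      exfalso
      have hB : (Finset.univ.filter fun x => T x = Letter.one) = insert i A := by
        ext x
        simp only [Finset.mem_filter, Finset.mem_univ, true_and, Finset.mem_insert, hAmem]
        by_cases hxi : x = i
        · subst hxi; simp [hti]
        · by_cases hxj : x = j
          · subst hxj; simp [htj, hj.1]
          · rw [hTx x hxi hxj]; simp [hxi]
      have hc := hT1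
      rw [count1, hB, Finset.card_insert_of_notMem hiA, hcardA] at hc
      omega
    | zero =>
      refine ⟨hT0, ?_⟩
      have hB : (Finset.univ.filter fun x => T x = Letter.one) = insert i (A.erase j) := by
        ext x
        simp only [Finset.mem_filter, Finset.mem_univ, true_and, Finset.mem_insert,
          Finset.mem_erase, hAmem]
        by_cases hxi : x = i
        · subst hxi; simp [hti]
        · by_cases hxj : x = j
          · subst hxj; simp [htj, hxi]
          · rw [hTx x hxi hxj]; simp [hxi, hxj]
      have hiAe : i ∉ A.erase j := fun h => hiA (Finset.mem_of_mem_erase h)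
      have hwtT : wt T = (i : ℕ) + ∑ x ∈ A.erase j, (x : ℕ) := by
        rw [wt, hB, Finset.sum_insert hiAe]
      have hwtS : wt S = (j : ℕ) + ∑ x ∈ A.erase j, (x : ℕ) := by
        rw [wt, ← hAdef, ← Finset.add_sum_erase A _ hjA]
      rw [hwtT, hwtS]
      have hlt : (i : ℕ) < (j : ℕ) := hij
      omega

set_option maxHeartbeats 1000000 in
/-- There is no nontrivial closed `V`-path starting at a vertex, i.e. at
a face sequence containing no `∗`. -/
theorem no_closed_vpath_vertex (n k m0 m1 : ℕ) (hk1 : 1 ≤ k) (hk2 : k ≤ n - 1)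
    (hm0 : m0 + k + 1 ≤ n) (hm1l : 1 ≤ m1) (hm1u : m1 + 1 ≤ k) (r : ℕ)
    (P : VPath n k m0 m1 r) (h0 : countStar (P.a 0) = 0) :
    P.a 0 ≠ P.a (Fin.last (r + 1)) := by
  have hzero : (0 : Fin (r + 2)) = ⟨0, by omega⟩ := by ext; simp
  have main : ∀ t : ℕ, (ht : t ≤ r + 1) →
      countStar (P.a ⟨t, by omega⟩) = 0 ∧
        wt (P.a ⟨t, by omega⟩) + t ≤ wt (P.a ⟨0, by omega⟩) := by
    intro t
    induction t with
    | zero =>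
      intro _
      rw [← hzero]
      exact ⟨h0, by omega⟩
    | succ t ih =>
      intro ht
      obtain ⟨ih0, ih1⟩ := ih (by omega)
      have hti : t < r + 1 := by omega
      have hcast : (⟨t, hti⟩ : Fin (r + 1)).castSucc = (⟨t, by omega⟩ : Fin (r + 2)) := rfl
      have hsucc : (⟨t, hti⟩ : Fin (r + 1)).succ = (⟨t + 1, by omega⟩ : Fin (r + 2)) := rfl
      have ih0' : countStar (P.a (⟨t, hti⟩ : Fin (r + 1)).castSucc) = 0 := by
        rw [hcast]; exact ih0
      have step := key_step hk1 ih0' (P.mem ⟨t, hti⟩) (P.face_a (⟨t, hti⟩ : Fin (r + 1)).succ)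
        (P.codim_right ⟨t, hti⟩) (Ne.symm (P.step_ne ⟨t, hti⟩))
      have s1 := step.1
      have s2 := step.2
      rw [hsucc] at s1
      rw [hcast, hsucc] at s2
      exact ⟨s1, by omega⟩
  intro heq
  have h := (main (r + 1) le_rfl).2
  have hlast : Fin.last (r + 1) = (⟨r + 1, by omega⟩ : Fin (r + 2)) := rfl
  rw [← hlast, ← hzero, ← heq] at h
  omega
end
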